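/- Let u and k be positive integers, let a_1, …, a_k be sampled independently and uniformly at random from the integer interval {−u, …, u}, and define p(k, s) := Pr[a_1 + ⋯ + a_k = s]. Then for every integer s, p(k, s) ≤ p(k, 0). In particular, for Q := 2u+1 and any integer ℓ, p(k, ℓQ) ≤ p(k, 0). -/

import Mathlib

/-- `pSum u k s` is the probability that the sum of `k` independent uniform random
integers from `{-u, …, u}` equals `s`. -/
noncomputable def pSum (u k : ℕ) (s : ℤ) : ℝ :=
  (((Fintype.piFinset fun _ : Fin k => Finset.Icc (-(u : ℤ)) (u : ℤ)).filter
      (fun a : Fin k → ℤ => ∑ i, a i = s)).card : ℝ) / (2 * (u : ℝ) + 1) ^ k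

/-- For positive integers `u, k`, `p(k, s) ≤ p(k, 0)` for every integer `s`;
in particular, for `Q := 2u+1` and any integer `ℓ`, `p(k, ℓQ) ≤ p(k, 0)`. -/

noncomputable def cnt (u k : ℕ) (s : ℤ) : ℕ :=
  ((Fintype.piFinset fun _ : Fin k => Finset.Icc (-(u : ℤ)) (u : ℤ)).filter
      (fun a : Fin k → ℤ => ∑ i, a i = s)).card

lemma cnt_zero (u : ℕ) (s : ℤ) : cnt u 0 s = if s = 0 then 1 else 0 := by
  unfold cnt
  simp [Finset.filter_eq', eq_comm]
  split <;> simp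

lemma neg_mem_aux (u k : ℕ) (t : ℤ) (a : Fin k → ℤ)
    (ha : a ∈ (Fintype.piFinset fun _ : Fin k => Finset.Icc (-(u : ℤ)) (u : ℤ)).filter
      (fun a : Fin k → ℤ => ∑ i, a i = t)) :
    (fun i => -(a i)) ∈ (Fintype.piFinset fun _ : Fin k => Finset.Icc (-(u : ℤ)) (u : ℤ)).filter
      (fun a : Fin k → ℤ => ∑ i, a i = -t) := by
  simp only [Finset.mem_filter, Fintype.mem_piFinset, Finset.mem_Icc] at ha ⊢
  refine ⟨fun i => by have := ha.1 i; omega, ?_⟩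
  simp [Finset.sum_neg_distrib, ha.2]

lemma cnt_neg (u k : ℕ) (s : ℤ) : cnt u k (-s) = cnt u k s := by
  unfold cnt
  refine Finset.card_bij' (fun a _ => fun i => -(a i)) (fun a _ => fun i => -(a i))
    ?_ ?_ ?_ ?_
  · intro a ha
    have := neg_mem_aux u k (-s) a ha
    simpa using this
  · intro a ha; exact neg_mem_aux u k s a ha
  · intro a _; funext i; simp
  · intro a _; funext i; simp

lemma cnt_succ (u k : ℕ) (s : ℤ) :
    cnt u (k+1) s = ∑ x ∈ Finset.Icc (-(u:ℤ)) u, cnt u k (s - x) := by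
  unfold cnt
  rw [Finset.card_eq_sum_card_fiberwise (f := fun a : Fin (k+1) → ℤ => a 0)
    (t := Finset.Icc (-(u:ℤ)) u)]
  · refine Finset.sum_congr rfl fun x hx => ?_
    refine Finset.card_bij' (fun a _ => Fin.tail a) (fun b _ => Fin.cons x b) ?_ ?_ ?_ ?_
    · intro a ha
      simp only [Finset.mem_filter, Fintype.mem_piFinset, Finset.mem_Icc] at ha ⊢
      obtain ⟨⟨h1, h2⟩, h3⟩ := ha
      refine ⟨fun i => h1 i.succ, ?_⟩
      rw [Fin.sum_univ_succ] at h2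
      simp [Fin.tail]
      omega
    · intro b hb
      simp only [Finset.mem_filter, Fintype.mem_piFinset, Finset.mem_Icc] at hb hx ⊢
      obtain ⟨h1, h2⟩ := hb
      refine ⟨⟨fun i => ?_, ?_⟩, by simp⟩
      · rcases Fin.eq_zero_or_eq_succ i with h | ⟨j, rfl⟩
        · subst h; simpa using hx
        · simpa using h1 j
      · rw [Fin.sum_univ_succ]; simp; omega
    · intro a ha
      simp only [Finset.mem_filter] at ha
      obtain ⟨-, h0⟩ := ha
      subst h0
      exact Fin.cons_self_tail a
    · intro b _; simp
  · intro a ha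
    simp only [Finset.mem_coe, Finset.mem_filter, Fintype.mem_piFinset, Finset.mem_Icc] at ha
    simp only [Finset.mem_coe, Finset.mem_Icc]
    exact ha.1 0

lemma cnt_mono (u : ℕ) : ∀ (k : ℕ) (s t : ℤ), 0 ≤ s → s ≤ t → cnt u k t ≤ cnt u k s := by
  intro k
  induction k with
  | zero =>
    intro s t hs hst
    rw [cnt_zero, cnt_zero]
    split_ifs <;> omega
  | succ k ih =>
    have key : ∀ s : ℤ, 0 ≤ s → cnt u (k+1) (s+1) ≤ cnt u (k+1) s := by
      intro s hs
      rw [cnt_succ, cnt_succ]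
      have hL : ∑ x ∈ Finset.Icc (-(u:ℤ)) u, cnt u k (s + 1 - x)
          = ∑ y ∈ Finset.Icc (-(u:ℤ) - 1) ((u:ℤ) - 1), cnt u k (s - y) := by
        rw [show Finset.Icc (-(u:ℤ) - 1) ((u:ℤ) - 1)
            = (Finset.Icc (-(u:ℤ)) u).map (addRightEmbedding (-1)) by
          rw [Finset.map_add_right_Icc]; ring_nf]
        rw [Finset.sum_map]
        refine Finset.sum_congr rfl fun x _ => ?_
        simp only [addRightEmbedding_apply]
        congr 1
        ring
      have e1 : Finset.Icc (-(u:ℤ) - 1) ((u:ℤ) - 1)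
          = insert (-(u:ℤ) - 1) (Finset.Icc (-(u:ℤ)) ((u:ℤ) - 1)) := by
        ext x; simp only [Finset.mem_Icc, Finset.mem_insert]; omega
      have e2 : Finset.Icc (-(u:ℤ)) (u:ℤ)
          = insert (u:ℤ) (Finset.Icc (-(u:ℤ)) ((u:ℤ) - 1)) := by
        ext x; simp only [Finset.mem_Icc, Finset.mem_insert]; omega
      rw [hL, e1, e2, Finset.sum_insert (by simp only [Finset.mem_Icc]; omega),
        Finset.sum_insert (by simp only [Finset.mem_Icc]; omega)]
      refine Nat.add_le_add_right ?_ _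
      rw [show s - (-(u:ℤ) - 1) = s + u + 1 by ring]
      rcases le_or_gt 0 (s - (u:ℤ)) with h | h
      · exact ih (s - u) (s + u + 1) h (by omega)
      · rw [show s - (u:ℤ) = -((u:ℤ) - s) by ring, cnt_neg]
        exact ih ((u:ℤ) - s) (s + u + 1) (by omega) (by omega)
    intro s t hs hst
    have gen : ∀ n : ℕ, cnt u (k+1) (s + n) ≤ cnt u (k+1) s := by
      intro n
      induction n with
      | zero => simp
      | succ n ihn =>
        have h1 := key (s + n) (by omega)
        have h2 : s + ((n : ℤ) + 1) = (s + n) + 1 := by ring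
        push_cast
        rw [h2]
        exact le_trans h1 ihn
    obtain ⟨n, rfl⟩ : ∃ n : ℕ, t = s + n := ⟨(t - s).toNat, by omega⟩
    exact gen n


theorem stmt_12 (u k : ℕ) (hu : 1 ≤ u) (hk : 1 ≤ k) :
    (∀ s : ℤ, pSum u k s ≤ pSum u k 0)
    ∧ ∀ ℓ : ℤ, pSum u k (ℓ * (2 * (u : ℤ) + 1)) ≤ pSum u k 0 := by
  have main : ∀ s : ℤ, pSum u k s ≤ pSum u k 0 := by
    intro s
    show (cnt u k s : ℝ) / (2 * (u : ℝ) + 1) ^ k ≤ (cnt u k 0 : ℝ) / (2 * (u : ℝ) + 1) ^ k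
    have hc : cnt u k s ≤ cnt u k 0 := by
      rcases le_or_gt 0 s with h | h
      · exact cnt_mono u k 0 s le_rfl h
      · rw [show s = -(-s) by ring, cnt_neg]
        exact cnt_mono u k 0 (-s) le_rfl (by omega)
    gcongr

  exact ⟨main, fun ℓ => main _⟩
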